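/- Let Ω be an H-bicovariant bimodule and χ ∈ H⊗H a counital 2-cocycle. Define (β_L)_χ : Ω → H⊗Ω by (β_L)_χ(v) = χ⁽¹⁾·v₍₁₎·χ⁻⁽¹⁾ ⊗ χ⁽²⁾·v₍∞̲₎·χ⁻⁽²⁾, where β_L(v) = v₍₁₎⊗v₍∞̲₎ (this is the conjugation χ·β_L(v)·χ⁻¹ in the H⊗H-bimodule H⊗Ω with (a⊗b)·(h⊗v)·(a′⊗b′) = a h a′ ⊗ b·v·b′). Then (β_L)_χ is counital, coassociative for the twisted coproduct Δ_χ (i.e. (Δ_χ⊗id)∘(β_L)_χ = (id⊗(β_L)_χ)∘(β_L)_χ), is a bimodule map for the unchanged bimodule structure (i.e. (β_L)_χ(h·v·g) = h₍<1>₎·(β_L)_χ(v)ᴴ·g₍<1>₎ ⊗ h₍<2>₎·(β_L)_χ(v)^Ω·g₍<2>₎ with Δ_χ(h) = h₍<1>₎⊗h₍<2>₎ and the appropriate legs), and commutes with the analogously twisted right coaction (β_R)_χ. -/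

import Mathlib

open scoped TensorProduct
open TensorProduct LinearMap

namespace PaperTwist

variable (k H : Type) [Field k] [Ring H] [HopfAlgebra k H]

/-- The comultiplication of `H`. -/
noncomputable def Δ : H →ₗ[k] H ⊗[k] H := Coalgebra.comul

/-- The counit of `H`. -/
noncomputable def ε : H →ₗ[k] k := Coalgebra.counit

/-- The antipode of `H`. -/
noncomputable def S : H →ₗ[k] H := HopfAlgebra.antipode k

/-- `χ`, with (two-sided) inverse `χ'` in the algebra `H ⊗ H`, is a counital 2-cocycle:
`χ₂₃ · ((id ⊗ Δ) χ) = χ₁₂ · ((Δ ⊗ id) χ)` and `(ε ⊗ id) χ = 1 = (id ⊗ ε) χ`. -/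
def IsCocycle (χ χ' : H ⊗[k] H) : Prop :=
  χ * χ' = 1 ∧ χ' * χ = 1 ∧
    (1 ⊗ₜ[k] χ) * (LinearMap.lTensor H (Δ k H) χ) =
      (TensorProduct.assoc k H H H) ((χ ⊗ₜ[k] 1) * (LinearMap.rTensor H (Δ k H) χ)) ∧
    (TensorProduct.lid k H) ((LinearMap.rTensor H (ε k H)) χ) = 1 ∧
    (TensorProduct.rid k H) ((LinearMap.lTensor H (ε k H)) χ) = 1

variable (V : Type) [AddCommGroup V] [Module k V]

/-- A (left-left) crossed module (Drinfeld–Radford–Yetter module) over `H`: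
a left action `ρ` and a counital coassociative left coaction `β` satisfying
`h₁·v₍₁₎ ⊗ h₂ ▷ v₍∞₎ = (h₁ ▷ v)₍₁₎·h₂ ⊗ (h₁ ▷ v)₍∞₎`, the latter expressed via arbitrary
finite representations of `Δ h`. -/
structure IsCrossedModule (ρ : H →ₗ[k] V →ₗ[k] V) (β : V →ₗ[k] H ⊗[k] V) : Prop where
  act_one : ∀ v : V, ρ 1 v = v
  act_mul : ∀ (g h : H) (v : V), ρ (g * h) v = ρ g (ρ h v)
  coact_counit : ∀ v : V, (TensorProduct.lid k V) ((LinearMap.rTensor V (ε k H)) (β v)) = v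
  coact_coassoc : ∀ v : V,
    (LinearMap.rTensor V (Δ k H)) (β v)
      = (TensorProduct.assoc k H H V).symm ((LinearMap.lTensor H β) (β v))
  compat : ∀ (h : H) (v : V) (ι : Type) (s : Finset ι) (h1 h2 : ι → H),
    Δ k H h = ∑ i ∈ s, h1 i ⊗ₜ[k] h2 i →
    ∑ i ∈ s, (TensorProduct.map (LinearMap.mulLeft k (h1 i)) (ρ (h2 i))) (β v)
      = ∑ i ∈ s, (LinearMap.rTensor V (LinearMap.mulRight k (h2 i))) (β (ρ (h1 i) v))

/-- The twisted coaction `β_χ(v) = χ⁽¹⁾·(χ⁻⁽¹⁾ ▷ v)₍₁₎·χ⁻⁽²⁾ ⊗ χ⁽²⁾ ▷ (χ⁻⁽¹⁾ ▷ v)₍∞₎`,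
expressed through finite representations `χ = ∑ x1 i ⊗ x2 i`, `χ⁻¹ = ∑ y1 j ⊗ y2 j`. -/
noncomputable def twistedCoaction (ρ : H →ₗ[k] V →ₗ[k] V) (β : V →ₗ[k] H ⊗[k] V)
    {ι₁ ι₂ : Type} (s₁ : Finset ι₁) (x1 x2 : ι₁ → H) (s₂ : Finset ι₂) (y1 y2 : ι₂ → H) :
    V →ₗ[k] H ⊗[k] V :=
  ∑ i ∈ s₁, ∑ j ∈ s₂,
    (TensorProduct.map ((LinearMap.mulLeft k (x1 i)) ∘ₗ (LinearMap.mulRight k (y2 j)))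
        (ρ (x2 i))) ∘ₗ β ∘ₗ (ρ (y1 j))

/-- The twisted coproduct `Δ_χ(h) = χ · Δ(h) · χ⁻¹`. -/
noncomputable def twistedComul (χ χ' : H ⊗[k] H) : H →ₗ[k] H ⊗[k] H :=
  (LinearMap.mulLeft k χ) ∘ₗ (LinearMap.mulRight k χ') ∘ₗ (Δ k H)


variable (Ω : Type) [AddCommGroup Ω] [Module k Ω]

/-- An `H`-bicovariant bimodule: an `H`-bimodule `Ω` (with left action `aL` and right action
`aR`) together with commuting counital coassociative left and right coactions `βL, βR`
that are bimodule maps. -/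
structure IsBicovariantBimodule (aL aR : H →ₗ[k] Ω →ₗ[k] Ω)
    (βL : Ω →ₗ[k] H ⊗[k] Ω) (βR : Ω →ₗ[k] Ω ⊗[k] H) : Prop where
  actL_one : ∀ v : Ω, aL 1 v = v
  actL_mul : ∀ (g h : H) (v : Ω), aL (g * h) v = aL g (aL h v)
  actR_one : ∀ v : Ω, aR 1 v = v
  actR_mul : ∀ (g h : H) (v : Ω), aR (g * h) v = aR h (aR g v)
  act_comm : ∀ (g h : H) (v : Ω), aL g (aR h v) = aR h (aL g v)
  βL_counit : ∀ v : Ω, (TensorProduct.lid k Ω) ((LinearMap.rTensor Ω (ε k H)) (βL v)) = v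
  βL_coassoc : ∀ v : Ω,
    (LinearMap.rTensor Ω (Δ k H)) (βL v)
      = (TensorProduct.assoc k H H Ω).symm ((LinearMap.lTensor H βL) (βL v))
  βR_counit : ∀ v : Ω, (TensorProduct.rid k Ω) ((LinearMap.lTensor Ω (ε k H)) (βR v)) = v
  βR_coassoc : ∀ v : Ω,
    (LinearMap.lTensor Ω (Δ k H)) (βR v)
      = (TensorProduct.assoc k Ω H H) ((LinearMap.rTensor H βR) (βR v))
  coact_comm : ∀ v : Ω,
    (LinearMap.lTensor H βR) (βL v)
      = (TensorProduct.assoc k H Ω H) ((LinearMap.rTensor H βL) (βR v))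
  βL_bimod : ∀ (h g : H) (v : Ω) (ι κ : Type) (s : Finset ι) (t : Finset κ)
      (h1 h2 : ι → H) (g1 g2 : κ → H),
    Δ k H h = ∑ i ∈ s, h1 i ⊗ₜ[k] h2 i → Δ k H g = ∑ j ∈ t, g1 j ⊗ₜ[k] g2 j →
    βL (aR g (aL h v))
      = ∑ i ∈ s, ∑ j ∈ t,
          (TensorProduct.map ((LinearMap.mulLeft k (h1 i)) ∘ₗ (LinearMap.mulRight k (g1 j)))
            ((aR (g2 j)) ∘ₗ (aL (h2 i)))) (βL v)
  βR_bimod : ∀ (h g : H) (v : Ω) (ι κ : Type) (s : Finset ι) (t : Finset κ)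
      (h1 h2 : ι → H) (g1 g2 : κ → H),
    Δ k H h = ∑ i ∈ s, h1 i ⊗ₜ[k] h2 i → Δ k H g = ∑ j ∈ t, g1 j ⊗ₜ[k] g2 j →
    βR (aR g (aL h v))
      = ∑ i ∈ s, ∑ j ∈ t,
          (TensorProduct.map ((aR (g1 j)) ∘ₗ (aL (h1 i)))
            ((LinearMap.mulLeft k (h2 i)) ∘ₗ (LinearMap.mulRight k (g2 j)))) (βR v)

/-- The twisted left coaction `(β_L)_χ(v) = χ⁽¹⁾·v₍₁₎·χ⁻⁽¹⁾ ⊗ χ⁽²⁾·v₍∞̲₎·χ⁻⁽²⁾`,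
expressed through finite representations `χ = ∑ x1 i ⊗ x2 i`, `χ⁻¹ = ∑ y1 j ⊗ y2 j`. -/
noncomputable def twistedβL (aL aR : H →ₗ[k] Ω →ₗ[k] Ω) (βL : Ω →ₗ[k] H ⊗[k] Ω)
    {ι₁ ι₂ : Type} (s₁ : Finset ι₁) (x1 x2 : ι₁ → H) (s₂ : Finset ι₂) (y1 y2 : ι₂ → H) :
    Ω →ₗ[k] H ⊗[k] Ω :=
  ∑ i ∈ s₁, ∑ j ∈ s₂,
    (TensorProduct.map ((LinearMap.mulLeft k (x1 i)) ∘ₗ (LinearMap.mulRight k (y1 j)))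
      ((aR (y2 j)) ∘ₗ (aL (x2 i)))) ∘ₗ βL

/-- The twisted right coaction `(β_R)_χ(v) = χ⁽¹⁾·v₍0̲₎·χ⁻⁽¹⁾ ⊗ χ⁽²⁾·v₍₁₎·χ⁻⁽²⁾`. -/
noncomputable def twistedβR (aL aR : H →ₗ[k] Ω →ₗ[k] Ω) (βR : Ω →ₗ[k] Ω ⊗[k] H)
    {ι₁ ι₂ : Type} (s₁ : Finset ι₁) (x1 x2 : ι₁ → H) (s₂ : Finset ι₂) (y1 y2 : ι₂ → H) :
    Ω →ₗ[k] Ω ⊗[k] H :=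
  ∑ i ∈ s₁, ∑ j ∈ s₂,
    (TensorProduct.map ((aR (y1 j)) ∘ₗ (aL (x1 i)))
      ((LinearMap.mulLeft k (x2 i)) ∘ₗ (LinearMap.mulRight k (y2 j)))) ∘ₗ βR

end PaperTwist

open PaperTwist

namespace PaperAux

variable {k : Type} [Field k]

section act2
variable {A B C X Y Z A' B' X' Y' : Type}
  [AddCommGroup A] [Module k A] [AddCommGroup B] [Module k B] [AddCommGroup C] [Module k C]
  [AddCommGroup X] [Module k X] [AddCommGroup Y] [Module k Y] [AddCommGroup Z] [Module k Z]
  [AddCommGroup A'] [Module k A'] [AddCommGroup B'] [Module k B']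
  [AddCommGroup X'] [Module k X'] [AddCommGroup Y'] [Module k Y']

noncomputable def act2 (l₁ : A →ₗ[k] X →ₗ[k] X) (l₂ : B →ₗ[k] Y →ₗ[k] Y) :
    A ⊗[k] B →ₗ[k] X ⊗[k] Y →ₗ[k] X ⊗[k] Y :=
  TensorProduct.lift (((TensorProduct.mapBilinear (RingHom.id k) X Y X Y).comp l₁).compl₂ l₂)

@[simp] lemma act2_tmul (l₁ : A →ₗ[k] X →ₗ[k] X) (l₂ : B →ₗ[k] Y →ₗ[k] Y) (a : A) (b : B) :
    act2 l₁ l₂ (a ⊗ₜ[k] b) = TensorProduct.map (l₁ a) (l₂ b) := by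
  simp [act2]

lemma act2_intertwine (l₁ : A →ₗ[k] X →ₗ[k] X) (l₂ : B →ₗ[k] Y →ₗ[k] Y)
    (l₁' : A' →ₗ[k] X' →ₗ[k] X') (l₂' : B' →ₗ[k] Y' →ₗ[k] Y')
    (f₁ : X →ₗ[k] X') (f₂ : Y →ₗ[k] Y') (g₁ : A →ₗ[k] A') (g₂ : B →ₗ[k] B')
    (h₁ : ∀ a, f₁ ∘ₗ l₁ a = l₁' (g₁ a) ∘ₗ f₁) (h₂ : ∀ b, f₂ ∘ₗ l₂ b = l₂' (g₂ b) ∘ₗ f₂)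
    (ξ : A ⊗[k] B) :
    (TensorProduct.map f₁ f₂) ∘ₗ act2 l₁ l₂ ξ
      = act2 l₁' l₂' (TensorProduct.map g₁ g₂ ξ) ∘ₗ TensorProduct.map f₁ f₂ := by
  induction ξ using TensorProduct.induction_on with
  | zero => simp
  | tmul a b => rw [act2_tmul, map_tmul, act2_tmul, ← TensorProduct.map_comp,
      ← TensorProduct.map_comp, h₁, h₂]
  | add x y hx hy => simp only [map_add, LinearMap.add_comp, LinearMap.comp_add, hx, hy]

lemma act2_commute (l₁ : A →ₗ[k] X →ₗ[k] X) (l₂ : B →ₗ[k] Y →ₗ[k] Y)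
    (r₁ : A' →ₗ[k] X →ₗ[k] X) (r₂ : B' →ₗ[k] Y →ₗ[k] Y)
    (h₁ : ∀ a c, l₁ a ∘ₗ r₁ c = r₁ c ∘ₗ l₁ a) (h₂ : ∀ b d, l₂ b ∘ₗ r₂ d = r₂ d ∘ₗ l₂ b)
    (ξ : A ⊗[k] B) (η : A' ⊗[k] B') :
    act2 l₁ l₂ ξ ∘ₗ act2 r₁ r₂ η = act2 r₁ r₂ η ∘ₗ act2 l₁ l₂ ξ := by
  induction ξ using TensorProduct.induction_on with
  | zero => simp
  | tmul a b =>
    induction η using TensorProduct.induction_on with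
    | zero => simp
    | tmul c d => rw [act2_tmul, act2_tmul, ← TensorProduct.map_comp, ← TensorProduct.map_comp,
        h₁, h₂]
    | add x y hx hy => simp only [map_add, LinearMap.add_comp, LinearMap.comp_add, hx, hy]
  | add x y hx hy => simp only [map_add, LinearMap.add_comp, LinearMap.comp_add, hx, hy]

lemma act2_assoc (l₁ : A →ₗ[k] X →ₗ[k] X) (l₂ : B →ₗ[k] Y →ₗ[k] Y) (l₃ : C →ₗ[k] Z →ₗ[k] Z)
    (ξ : (A ⊗[k] B) ⊗[k] C) (m : (X ⊗[k] Y) ⊗[k] Z) :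
    TensorProduct.assoc k X Y Z (act2 (act2 l₁ l₂) l₃ ξ m)
      = act2 l₁ (act2 l₂ l₃) (TensorProduct.assoc k A B C ξ)
          (TensorProduct.assoc k X Y Z m) := by
  induction ξ using TensorProduct.induction_on with
  | zero => simp
  | tmul p c =>
    induction p using TensorProduct.induction_on with
    | zero => simp [TensorProduct.zero_tmul]
    | tmul a b =>
      induction m using TensorProduct.induction_on with
      | zero => simp
      | tmul q z =>
        induction q using TensorProduct.induction_on with
        | zero => simp [TensorProduct.zero_tmul]
        | tmul x y => simp
        | add q₁ q₂ h₁ h₂ => simp only [TensorProduct.add_tmul, map_add, h₁, h₂]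
      | add m₁ m₂ h₁ h₂ => simp only [map_add, h₁, h₂]
    | add p₁ p₂ h₁ h₂ =>
      simp only [TensorProduct.add_tmul, map_add, LinearMap.add_apply, h₁, h₂]
  | add ξ₁ ξ₂ h₁ h₂ => simp only [map_add, LinearMap.add_apply, h₁, h₂]

end act2


section act2ring
variable {A B C X Y : Type}
  [Ring A] [Algebra k A] [Ring B] [Algebra k B] [Ring C] [Algebra k C]
  [AddCommGroup X] [Module k X] [AddCommGroup Y] [Module k Y]

lemma act2_mul (l₁ : A →ₗ[k] X →ₗ[k] X) (l₂ : B →ₗ[k] Y →ₗ[k] Y)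
    (h₁ : ∀ a c, l₁ (a * c) = l₁ a ∘ₗ l₁ c) (h₂ : ∀ b d, l₂ (b * d) = l₂ b ∘ₗ l₂ d)
    (ξ η : A ⊗[k] B) :
    act2 l₁ l₂ (ξ * η) = act2 l₁ l₂ ξ ∘ₗ act2 l₁ l₂ η := by
  induction ξ using TensorProduct.induction_on with
  | zero => simp
  | tmul a b =>
    induction η using TensorProduct.induction_on with
    | zero => simp
    | tmul c d => rw [Algebra.TensorProduct.tmul_mul_tmul, act2_tmul, act2_tmul, act2_tmul,
        h₁, h₂, TensorProduct.map_comp]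
    | add x y hx hy => simp only [mul_add, map_add, hx, hy, LinearMap.comp_add]
  | add x y hx hy => simp only [add_mul, map_add, hx, hy, LinearMap.add_comp]

lemma act2_antimul (l₁ : A →ₗ[k] X →ₗ[k] X) (l₂ : B →ₗ[k] Y →ₗ[k] Y)
    (h₁ : ∀ a c, l₁ (a * c) = l₁ c ∘ₗ l₁ a) (h₂ : ∀ b d, l₂ (b * d) = l₂ d ∘ₗ l₂ b)
    (ξ η : A ⊗[k] B) :
    act2 l₁ l₂ (ξ * η) = act2 l₁ l₂ η ∘ₗ act2 l₁ l₂ ξ := by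
  induction ξ using TensorProduct.induction_on with
  | zero => simp
  | tmul a b =>
    induction η using TensorProduct.induction_on with
    | zero => simp
    | tmul c d => rw [Algebra.TensorProduct.tmul_mul_tmul, act2_tmul, act2_tmul, act2_tmul,
        h₁, h₂, TensorProduct.map_comp]
    | add x y hx hy => simp only [mul_add, map_add, hx, hy, LinearMap.add_comp]
  | add x y hx hy => simp only [add_mul, map_add, hx, hy, LinearMap.comp_add]

lemma act2_one (l₁ : A →ₗ[k] X →ₗ[k] X) (l₂ : B →ₗ[k] Y →ₗ[k] Y)
    (h₁ : l₁ 1 = LinearMap.id) (h₂ : l₂ 1 = LinearMap.id) :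
    act2 l₁ l₂ (1 : A ⊗[k] B) = LinearMap.id := by
  rw [Algebra.TensorProduct.one_def, act2_tmul, h₁, h₂, TensorProduct.map_id]

lemma act2_mulmul (ξ η : A ⊗[k] B) :
    act2 (LinearMap.mul k A) (LinearMap.mul k B) ξ η = ξ * η := by
  induction ξ using TensorProduct.induction_on with
  | zero => simp
  | tmul a b =>
    induction η using TensorProduct.induction_on with
    | zero => simp
    | tmul c d => simp [Algebra.TensorProduct.tmul_mul_tmul]
    | add x y hx hy => simp only [mul_add, map_add, hx, hy]
  | add x y hx hy => simp only [add_mul, map_add, LinearMap.add_apply, hx, hy]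

lemma act2_flipmul (ξ η : A ⊗[k] B) :
    act2 (LinearMap.mul k A).flip (LinearMap.mul k B).flip ξ η = η * ξ := by
  induction ξ using TensorProduct.induction_on with
  | zero => simp
  | tmul a b =>
    induction η using TensorProduct.induction_on with
    | zero => simp
    | tmul c d => simp [Algebra.TensorProduct.tmul_mul_tmul]
    | add x y hx hy => simp only [add_mul, map_add, hx, hy]
  | add x y hx hy => simp only [mul_add, map_add, LinearMap.add_apply, hx, hy]

lemma rTensor_mul' (f : A →ₗ[k] C) (hf : ∀ a c, f (a * c) = f a * f c) (x y : A ⊗[k] B) :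
    rTensor B f (x * y) = rTensor B f x * rTensor B f y := by
  induction x using TensorProduct.induction_on with
  | zero => simp
  | tmul a b =>
    induction y using TensorProduct.induction_on with
    | zero => simp
    | tmul c d => simp [Algebra.TensorProduct.tmul_mul_tmul, hf]
    | add x y hx hy => simp only [mul_add, map_add, hx, hy]
  | add x y hx hy => simp only [add_mul, map_add, hx, hy]

lemma lTensor_mul' (f : B →ₗ[k] C) (hf : ∀ a c, f (a * c) = f a * f c) (x y : A ⊗[k] B) :
    lTensor A f (x * y) = lTensor A f x * lTensor A f y := by
  induction x using TensorProduct.induction_on with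
  | zero => simp
  | tmul a b =>
    induction y using TensorProduct.induction_on with
    | zero => simp
    | tmul c d => simp [Algebra.TensorProduct.tmul_mul_tmul, hf]
    | add x y hx hy => simp only [mul_add, map_add, hx, hy]
  | add x y hx hy => simp only [add_mul, map_add, hx, hy]

lemma rTensor_one' (f : A →ₗ[k] C) (hf : f 1 = 1) : rTensor B f (1 : A ⊗[k] B) = 1 := by
  rw [Algebra.TensorProduct.one_def, rTensor_tmul, hf, ← Algebra.TensorProduct.one_def]

lemma lTensor_one' (f : B →ₗ[k] C) (hf : f 1 = 1) : lTensor A f (1 : A ⊗[k] B) = 1 := by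
  rw [Algebra.TensorProduct.one_def, lTensor_tmul, hf, ← Algebra.TensorProduct.one_def]

set_option synthInstance.maxHeartbeats 400000 in
lemma assoc_mul' (x y : (A ⊗[k] B) ⊗[k] C) :
    TensorProduct.assoc k A B C (x * y)
      = TensorProduct.assoc k A B C x * TensorProduct.assoc k A B C y := by
  induction x using TensorProduct.induction_on with
  | zero => simp
  | tmul p c =>
    induction p using TensorProduct.induction_on with
    | zero => simp [TensorProduct.zero_tmul]
    | tmul a b =>
      induction y using TensorProduct.induction_on with
      | zero => simp
      | tmul q f =>
        induction q using TensorProduct.induction_on with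
        | zero => simp [TensorProduct.zero_tmul]
        | tmul d e => simp [Algebra.TensorProduct.tmul_mul_tmul]
        | add q₁ q₂ h₁ h₂ => simp only [TensorProduct.add_tmul, mul_add, add_mul, map_add, h₁, h₂]
      | add y₁ y₂ h₁ h₂ => simp only [mul_add, map_add, h₁, h₂]
    | add p₁ p₂ h₁ h₂ => simp only [TensorProduct.add_tmul, add_mul, map_add, h₁, h₂]
  | add x₁ x₂ h₁ h₂ => simp only [add_mul, map_add, h₁, h₂]

lemma assoc_one' : TensorProduct.assoc k A B C (1 : (A ⊗[k] B) ⊗[k] C) = 1 := by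
  simp [Algebra.TensorProduct.one_def]

end act2ring
end PaperAux

namespace PaperAux

variable {k H Ω : Type} [Field k] [Ring H] [HopfAlgebra k H] [AddCommGroup Ω] [Module k Ω]

/-! ### The various sandwich actions -/

noncomputable def LM (aL : H →ₗ[k] Ω →ₗ[k] Ω) :
    H ⊗[k] H →ₗ[k] H ⊗[k] Ω →ₗ[k] H ⊗[k] Ω := act2 (LinearMap.mul k H) aL
noncomputable def RM (aR : H →ₗ[k] Ω →ₗ[k] Ω) :
    H ⊗[k] H →ₗ[k] H ⊗[k] Ω →ₗ[k] H ⊗[k] Ω := act2 (LinearMap.mul k H).flip aR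
noncomputable def LN (aL : H →ₗ[k] Ω →ₗ[k] Ω) :
    H ⊗[k] H →ₗ[k] Ω ⊗[k] H →ₗ[k] Ω ⊗[k] H := act2 aL (LinearMap.mul k H)
noncomputable def RN (aR : H →ₗ[k] Ω →ₗ[k] Ω) :
    H ⊗[k] H →ₗ[k] Ω ⊗[k] H →ₗ[k] Ω ⊗[k] H := act2 aR (LinearMap.mul k H).flip
noncomputable def LP (aL : H →ₗ[k] Ω →ₗ[k] Ω) :
    (H ⊗[k] H) ⊗[k] H →ₗ[k] (H ⊗[k] H) ⊗[k] Ω →ₗ[k] (H ⊗[k] H) ⊗[k] Ω :=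
  act2 (act2 (LinearMap.mul k H) (LinearMap.mul k H)) aL
noncomputable def RP (aR : H →ₗ[k] Ω →ₗ[k] Ω) :
    (H ⊗[k] H) ⊗[k] H →ₗ[k] (H ⊗[k] H) ⊗[k] Ω →ₗ[k] (H ⊗[k] H) ⊗[k] Ω :=
  act2 (act2 (LinearMap.mul k H).flip (LinearMap.mul k H).flip) aR
noncomputable def LQ (aL : H →ₗ[k] Ω →ₗ[k] Ω) :
    H ⊗[k] (H ⊗[k] H) →ₗ[k] H ⊗[k] (H ⊗[k] Ω) →ₗ[k] H ⊗[k] (H ⊗[k] Ω) :=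
  act2 (LinearMap.mul k H) (LM aL)
noncomputable def RQ (aR : H →ₗ[k] Ω →ₗ[k] Ω) :
    H ⊗[k] (H ⊗[k] H) →ₗ[k] H ⊗[k] (H ⊗[k] Ω) →ₗ[k] H ⊗[k] (H ⊗[k] Ω) :=
  act2 (LinearMap.mul k H).flip (RM aR)
noncomputable def LP' (aL : H →ₗ[k] Ω →ₗ[k] Ω) :
    (H ⊗[k] H) ⊗[k] H →ₗ[k] (H ⊗[k] Ω) ⊗[k] H →ₗ[k] (H ⊗[k] Ω) ⊗[k] H :=
  act2 (LM aL) (LinearMap.mul k H)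
noncomputable def RP' (aR : H →ₗ[k] Ω →ₗ[k] Ω) :
    (H ⊗[k] H) ⊗[k] H →ₗ[k] (H ⊗[k] Ω) ⊗[k] H →ₗ[k] (H ⊗[k] Ω) ⊗[k] H :=
  act2 (RM aR) (LinearMap.mul k H).flip
noncomputable def LQ' (aL : H →ₗ[k] Ω →ₗ[k] Ω) :
    H ⊗[k] (H ⊗[k] H) →ₗ[k] H ⊗[k] (Ω ⊗[k] H) →ₗ[k] H ⊗[k] (Ω ⊗[k] H) :=
  act2 (LinearMap.mul k H) (LN aL)
noncomputable def RQ' (aR : H →ₗ[k] Ω →ₗ[k] Ω) :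
    H ⊗[k] (H ⊗[k] H) →ₗ[k] H ⊗[k] (Ω ⊗[k] H) →ₗ[k] H ⊗[k] (Ω ⊗[k] H) :=
  act2 (LinearMap.mul k H).flip (RN aR)

/-! ### Basic component lemmas -/

lemma mul_comp' (a c : H) :
    LinearMap.mul k H (a * c) = LinearMap.mul k H a ∘ₗ LinearMap.mul k H c := by
  ext x; simp [mul_assoc]

lemma flip_comp' (a c : H) :
    (LinearMap.mul k H).flip (a * c) = (LinearMap.mul k H).flip c ∘ₗ (LinearMap.mul k H).flip a := by
  ext x; simp [mul_assoc]

lemma mul_flip_comm' (a c : H) :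
    LinearMap.mul k H a ∘ₗ (LinearMap.mul k H).flip c
      = (LinearMap.mul k H).flip c ∘ₗ LinearMap.mul k H a := by
  ext x; simp [mul_assoc]

lemma mul_one'' : LinearMap.mul k H 1 = LinearMap.id := by ext x; simp
lemma flip_one'' : (LinearMap.mul k H).flip 1 = LinearMap.id := by ext x; simp

lemma Δ_mul' (a c : H) : Δ k H (a * c) = Δ k H a * Δ k H c := Bialgebra.comul_mul a c
lemma Δ_one' : Δ k H (1 : H) = 1 := Bialgebra.comul_one
lemma ε_mul' (a c : H) : ε k H (a * c) = ε k H a * ε k H c := Bialgebra.counit_mul a c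
lemma ε_one' : ε k H (1 : H) = 1 := Bialgebra.counit_one

section withB
variable {aL aR : H →ₗ[k] Ω →ₗ[k] Ω} {βL : Ω →ₗ[k] H ⊗[k] Ω} {βR : Ω →ₗ[k] Ω ⊗[k] H}
variable (hB : IsBicovariantBimodule k H Ω aL aR βL βR)

include hB

lemma aL_comp (a c : H) : aL (a * c) = aL a ∘ₗ aL c := by
  ext v; exact hB.actL_mul a c v
lemma aR_anticomp (a c : H) : aR (a * c) = aR c ∘ₗ aR a := by
  ext v; exact hB.actR_mul a c v
lemma aL_one' : aL (1 : H) = LinearMap.id := by ext v; exact hB.actL_one v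
lemma aR_one' : aR (1 : H) = LinearMap.id := by ext v; exact hB.actR_one v
lemma aLR_comm (a c : H) : aL a ∘ₗ aR c = aR c ∘ₗ aL a := by
  ext v; exact hB.act_comm a c v

/-! ### Multiplicativity and commutation of the sandwich actions -/

lemma LM_mul (ξ η : H ⊗[k] H) : LM aL (ξ * η) = LM aL ξ ∘ₗ LM aL η :=
  act2_mul _ _ mul_comp' (aL_comp hB) ξ η
lemma RM_mul (ξ η : H ⊗[k] H) : RM aR (ξ * η) = RM aR η ∘ₗ RM aR ξ :=
  act2_antimul _ _ flip_comp' (aR_anticomp hB) ξ η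
lemma LN_mul (ξ η : H ⊗[k] H) : LN aL (ξ * η) = LN aL ξ ∘ₗ LN aL η :=
  act2_mul _ _ (aL_comp hB) mul_comp' ξ η
lemma RN_mul (ξ η : H ⊗[k] H) : RN aR (ξ * η) = RN aR η ∘ₗ RN aR ξ :=
  act2_antimul _ _ (aR_anticomp hB) flip_comp' ξ η
lemma LM_RM_comm (ξ η : H ⊗[k] H) : LM aL ξ ∘ₗ RM aR η = RM aR η ∘ₗ LM aL ξ :=
  act2_commute _ _ _ _ mul_flip_comm' (aLR_comm hB) ξ η
lemma LN_RN_comm (ξ η : H ⊗[k] H) : LN aL ξ ∘ₗ RN aR η = RN aR η ∘ₗ LN aL ξ :=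
  act2_commute _ _ _ _ (aLR_comm hB) mul_flip_comm' ξ η
lemma LM_one : LM aL (1 : H ⊗[k] H) = LinearMap.id := act2_one _ _ mul_one'' (aL_one' hB)
lemma RM_one : RM aR (1 : H ⊗[k] H) = LinearMap.id := act2_one _ _ flip_one'' (aR_one' hB)
lemma LN_one : LN aL (1 : H ⊗[k] H) = LinearMap.id := act2_one _ _ (aL_one' hB) mul_one''
lemma RN_one : RN aR (1 : H ⊗[k] H) = LinearMap.id := act2_one _ _ (aR_one' hB) flip_one''

lemma LP_mul (ξ η : (H ⊗[k] H) ⊗[k] H) : LP aL (ξ * η) = LP aL ξ ∘ₗ LP aL η :=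
  act2_mul _ _ (act2_mul _ _ mul_comp' mul_comp') (aL_comp hB) ξ η
lemma RP_mul (ξ η : (H ⊗[k] H) ⊗[k] H) : RP aR (ξ * η) = RP aR η ∘ₗ RP aR ξ :=
  act2_antimul _ _ (act2_antimul _ _ flip_comp' flip_comp') (aR_anticomp hB) ξ η
lemma LP_RP_comm (ξ η : (H ⊗[k] H) ⊗[k] H) : LP aL ξ ∘ₗ RP aR η = RP aR η ∘ₗ LP aL ξ :=
  act2_commute _ _ _ _ (act2_commute _ _ _ _ mul_flip_comm' mul_flip_comm') (aLR_comm hB) ξ η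
lemma LQ_mul (ξ η : H ⊗[k] (H ⊗[k] H)) : LQ aL (ξ * η) = LQ aL ξ ∘ₗ LQ aL η :=
  act2_mul _ _ mul_comp' (LM_mul hB) ξ η
lemma RQ_mul (ξ η : H ⊗[k] (H ⊗[k] H)) : RQ aR (ξ * η) = RQ aR η ∘ₗ RQ aR ξ :=
  act2_antimul _ _ flip_comp' (RM_mul hB) ξ η
lemma LQ_RQ_comm (ξ η : H ⊗[k] (H ⊗[k] H)) : LQ aL ξ ∘ₗ RQ aR η = RQ aR η ∘ₗ LQ aL ξ :=
  act2_commute _ _ _ _ mul_flip_comm' (LM_RM_comm hB) ξ η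
lemma LP'_mul (ξ η : (H ⊗[k] H) ⊗[k] H) : LP' aL (ξ * η) = LP' aL ξ ∘ₗ LP' aL η :=
  act2_mul _ _ (LM_mul hB) mul_comp' ξ η
lemma RP'_mul (ξ η : (H ⊗[k] H) ⊗[k] H) : RP' aR (ξ * η) = RP' aR η ∘ₗ RP' aR ξ :=
  act2_antimul _ _ (RM_mul hB) flip_comp' ξ η
lemma LP'_RP'_comm (ξ η : (H ⊗[k] H) ⊗[k] H) : LP' aL ξ ∘ₗ RP' aR η = RP' aR η ∘ₗ LP' aL ξ :=
  act2_commute _ _ _ _ (LM_RM_comm hB) mul_flip_comm' ξ η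
lemma LQ'_mul (ξ η : H ⊗[k] (H ⊗[k] H)) : LQ' aL (ξ * η) = LQ' aL ξ ∘ₗ LQ' aL η :=
  act2_mul _ _ mul_comp' (LN_mul hB) ξ η
lemma RQ'_mul (ξ η : H ⊗[k] (H ⊗[k] H)) : RQ' aR (ξ * η) = RQ' aR η ∘ₗ RQ' aR ξ :=
  act2_antimul _ _ flip_comp' (RN_mul hB) ξ η
lemma LQ'_RQ'_comm (ξ η : H ⊗[k] (H ⊗[k] H)) : LQ' aL ξ ∘ₗ RQ' aR η = RQ' aR η ∘ₗ LQ' aL ξ :=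
  act2_commute _ _ _ _ mul_flip_comm' (LN_RN_comm hB) ξ η


lemma term_L (a b c d : H) (z : H ⊗[k] Ω) :
    TensorProduct.map (LinearMap.mulLeft k a ∘ₗ LinearMap.mulRight k c) (aR d ∘ₗ aL b) z
      = LM aL (a ⊗ₜ[k] b) (RM aR (c ⊗ₜ[k] d) z) := by
  induction z using TensorProduct.induction_on with
  | zero => simp
  | tmul h w =>
    simp [LM, RM, LinearMap.mul_apply', mul_assoc, hB.act_comm]
  | add z₁ z₂ h₁ h₂ => simp only [map_add, h₁, h₂]

lemma term_N (a b c d : H) (z : Ω ⊗[k] H) :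
    TensorProduct.map (aR c ∘ₗ aL a) (LinearMap.mulLeft k b ∘ₗ LinearMap.mulRight k d) z
      = LN aL (a ⊗ₜ[k] b) (RN aR (c ⊗ₜ[k] d) z) := by
  induction z using TensorProduct.induction_on with
  | zero => simp
  | tmul w h =>
    simp [LN, RN, LinearMap.mul_apply', mul_assoc, hB.act_comm]
  | add z₁ z₂ h₁ h₂ => simp only [map_add, h₁, h₂]

lemma βL_mod (h g : H) (v : Ω) :
    βL (aR g (aL h v)) = LM aL (Δ k H h) (RM aR (Δ k H g) (βL v)) := by
  obtain ⟨sh, hsh⟩ := TensorProduct.exists_finset (Δ k H h)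
  obtain ⟨sg, hsg⟩ := TensorProduct.exists_finset (Δ k H g)
  rw [hB.βL_bimod h g v (H × H) (H × H) sh sg Prod.fst Prod.snd Prod.fst Prod.snd hsh hsg]
  simp only [hsh, hsg, map_sum, LinearMap.sum_apply]
  rw [Finset.sum_comm]
  exact Finset.sum_congr rfl fun q _ => Finset.sum_congr rfl fun p _ =>
    term_L hB p.1 p.2 q.1 q.2 (βL v)

lemma βR_mod (h g : H) (v : Ω) :
    βR (aR g (aL h v)) = LN aL (Δ k H h) (RN aR (Δ k H g) (βR v)) := by
  obtain ⟨sh, hsh⟩ := TensorProduct.exists_finset (Δ k H h)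
  obtain ⟨sg, hsg⟩ := TensorProduct.exists_finset (Δ k H g)
  rw [hB.βR_bimod h g v (H × H) (H × H) sh sg Prod.fst Prod.snd Prod.fst Prod.snd hsh hsg]
  simp only [hsh, hsg, map_sum, LinearMap.sum_apply]
  rw [Finset.sum_comm]
  exact Finset.sum_congr rfl fun q _ => Finset.sum_congr rfl fun p _ =>
    term_N hB p.1 p.2 q.1 q.2 (βR v)

lemma βL_actL (b : H) (v : Ω) : βL (aL b v) = LM aL (Δ k H b) (βL v) := by
  have h := βL_mod hB b 1 v
  rwa [hB.actR_one, Δ_one', RM_one hB, LinearMap.id_apply] at h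

lemma βL_actR (g : H) (v : Ω) : βL (aR g v) = RM aR (Δ k H g) (βL v) := by
  have h := βL_mod hB 1 g v
  rwa [hB.actL_one, Δ_one', LM_one hB, LinearMap.id_apply] at h

lemma βR_actL (b : H) (v : Ω) : βR (aL b v) = LN aL (Δ k H b) (βR v) := by
  have h := βR_mod hB b 1 v
  rwa [hB.actR_one, Δ_one', RN_one hB, LinearMap.id_apply] at h

lemma βR_actR (g : H) (v : Ω) : βR (aR g v) = RN aR (Δ k H g) (βR v) := by
  have h := βR_mod hB 1 g v
  rwa [hB.actL_one, Δ_one', LN_one hB, LinearMap.id_apply] at h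

lemma βL_actL_comp (b : H) : βL ∘ₗ aL b = LM aL (Δ k H b) ∘ₗ βL := by
  ext v; simp only [LinearMap.comp_apply]; exact βL_actL hB b v
lemma βL_actR_comp (g : H) : βL ∘ₗ aR g = RM aR (Δ k H g) ∘ₗ βL := by
  ext v; simp only [LinearMap.comp_apply]; exact βL_actR hB g v
lemma βR_actL_comp (b : H) : βR ∘ₗ aL b = LN aL (Δ k H b) ∘ₗ βR := by
  ext v; simp only [LinearMap.comp_apply]; exact βR_actL hB b v
lemma βR_actR_comp (g : H) : βR ∘ₗ aR g = RN aR (Δ k H g) ∘ₗ βR := by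
  ext v; simp only [LinearMap.comp_apply]; exact βR_actR hB g v


end withB

noncomputable def eps2 : H ⊗[k] H →ₗ[k] H :=
  (TensorProduct.lid k H).toLinearMap ∘ₗ LinearMap.rTensor H (ε k H)

@[simp] lemma eps2_tmul (a b : H) : eps2 (a ⊗ₜ[k] b) = ε k H a • b := by
  simp [eps2]

lemma eps2_mul (ξ η : H ⊗[k] H) : eps2 (ξ * η) = eps2 ξ * eps2 η := by
  induction ξ using TensorProduct.induction_on with
  | zero => simp
  | tmul a b =>
    induction η using TensorProduct.induction_on with
    | zero => simp
    | tmul c d =>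
      simp only [Algebra.TensorProduct.tmul_mul_tmul, eps2_tmul, ε_mul', mul_smul,
        smul_mul_assoc, mul_smul_comm]
      rw [smul_comm]
    | add x y h₁ h₂ => simp only [mul_add, map_add, h₁, h₂]
  | add x y h₁ h₂ => simp only [add_mul, map_add, h₁, h₂]

lemma eps2_one : eps2 (1 : H ⊗[k] H) = 1 := by
  simp [Algebra.TensorProduct.one_def, ε_one']

section withB2
variable {aL aR : H →ₗ[k] Ω →ₗ[k] Ω} {βL : Ω →ₗ[k] H ⊗[k] Ω} {βR : Ω →ₗ[k] Ω ⊗[k] H}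
variable {ι₁ ι₂ : Type} {s₁ : Finset ι₁} {x1 x2 : ι₁ → H} {s₂ : Finset ι₂} {y1 y2 : ι₂ → H}
variable (hB : IsBicovariantBimodule k H Ω aL aR βL βR)

include hB

lemma rTensor_Δ_LM (ξ : H ⊗[k] H) (z : H ⊗[k] Ω) :
    LinearMap.rTensor Ω (Δ k H) (LM aL ξ z)
      = LP aL (LinearMap.rTensor H (Δ k H) ξ) (LinearMap.rTensor Ω (Δ k H) z) := by
  have h₁ : ∀ a : H, Δ k H ∘ₗ LinearMap.mul k H a
      = act2 (LinearMap.mul k H) (LinearMap.mul k H) (Δ k H a) ∘ₗ Δ k H := by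
    intro a; ext x
    simp only [LinearMap.comp_apply, LinearMap.mul_apply', act2_mulmul, Δ_mul']
  have h₂ : ∀ b : H, (LinearMap.id : Ω →ₗ[k] Ω) ∘ₗ aL b = aL ((LinearMap.id : H →ₗ[k] H) b) ∘ₗ (LinearMap.id : Ω →ₗ[k] Ω) := by intro b; ext x; rfl
  have h := act2_intertwine (LinearMap.mul k H) aL
      (act2 (LinearMap.mul k H) (LinearMap.mul k H)) aL (Δ k H) (LinearMap.id : Ω →ₗ[k] Ω) (Δ k H)
      (LinearMap.id : H →ₗ[k] H) h₁ h₂ ξ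
  exact LinearMap.congr_fun h z

lemma rTensor_Δ_RM (ξ : H ⊗[k] H) (z : H ⊗[k] Ω) :
    LinearMap.rTensor Ω (Δ k H) (RM aR ξ z)
      = RP aR (LinearMap.rTensor H (Δ k H) ξ) (LinearMap.rTensor Ω (Δ k H) z) := by
  have h₁ : ∀ a : H, Δ k H ∘ₗ (LinearMap.mul k H).flip a
      = act2 (LinearMap.mul k H).flip (LinearMap.mul k H).flip (Δ k H a) ∘ₗ Δ k H := by
    intro a; ext x
    simp only [LinearMap.comp_apply, LinearMap.flip_apply, LinearMap.mul_apply',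
      act2_flipmul, Δ_mul']
  have h₂ : ∀ b : H, (LinearMap.id : Ω →ₗ[k] Ω) ∘ₗ aR b = aR ((LinearMap.id : H →ₗ[k] H) b) ∘ₗ (LinearMap.id : Ω →ₗ[k] Ω) := by intro b; ext x; rfl
  have h := act2_intertwine (LinearMap.mul k H).flip aR
      (act2 (LinearMap.mul k H).flip (LinearMap.mul k H).flip) aR (Δ k H) (LinearMap.id : Ω →ₗ[k] Ω) (Δ k H)
      (LinearMap.id : H →ₗ[k] H) h₁ h₂ ξ
  exact LinearMap.congr_fun h z

lemma lTensor_βL_LM (ξ : H ⊗[k] H) (z : H ⊗[k] Ω) :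
    LinearMap.lTensor H βL (LM aL ξ z)
      = LQ aL (LinearMap.lTensor H (Δ k H) ξ) (LinearMap.lTensor H βL z) := by
  have h₁ : ∀ a : H, (LinearMap.id : H →ₗ[k] H) ∘ₗ LinearMap.mul k H a
      = LinearMap.mul k H ((LinearMap.id : H →ₗ[k] H) a) ∘ₗ (LinearMap.id : H →ₗ[k] H) := by intro a; ext x; rfl
  have h := act2_intertwine (LinearMap.mul k H) aL (LinearMap.mul k H) (LM aL)
      (LinearMap.id : H →ₗ[k] H) βL (LinearMap.id : H →ₗ[k] H) (Δ k H) h₁ (βL_actL_comp hB) ξ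
  exact LinearMap.congr_fun h z

lemma lTensor_βL_RM (ξ : H ⊗[k] H) (z : H ⊗[k] Ω) :
    LinearMap.lTensor H βL (RM aR ξ z)
      = RQ aR (LinearMap.lTensor H (Δ k H) ξ) (LinearMap.lTensor H βL z) := by
  have h₁ : ∀ a : H, (LinearMap.id : H →ₗ[k] H) ∘ₗ (LinearMap.mul k H).flip a
      = (LinearMap.mul k H).flip ((LinearMap.id : H →ₗ[k] H) a) ∘ₗ (LinearMap.id : H →ₗ[k] H) := by intro a; ext x; rfl
  have h := act2_intertwine (LinearMap.mul k H).flip aR (LinearMap.mul k H).flip (RM aR)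
      (LinearMap.id : H →ₗ[k] H) βL (LinearMap.id : H →ₗ[k] H) (Δ k H) h₁ (βL_actR_comp hB) ξ
  exact LinearMap.congr_fun h z

lemma lTensor_βR_LM (ξ : H ⊗[k] H) (z : H ⊗[k] Ω) :
    LinearMap.lTensor H βR (LM aL ξ z)
      = LQ' aL (LinearMap.lTensor H (Δ k H) ξ) (LinearMap.lTensor H βR z) := by
  have h₁ : ∀ a : H, (LinearMap.id : H →ₗ[k] H) ∘ₗ LinearMap.mul k H a
      = LinearMap.mul k H ((LinearMap.id : H →ₗ[k] H) a) ∘ₗ (LinearMap.id : H →ₗ[k] H) := by intro a; ext x; rfl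
  have h := act2_intertwine (LinearMap.mul k H) aL (LinearMap.mul k H) (LN aL)
      (LinearMap.id : H →ₗ[k] H) βR (LinearMap.id : H →ₗ[k] H) (Δ k H) h₁ (βR_actL_comp hB) ξ
  exact LinearMap.congr_fun h z

lemma lTensor_βR_RM (ξ : H ⊗[k] H) (z : H ⊗[k] Ω) :
    LinearMap.lTensor H βR (RM aR ξ z)
      = RQ' aR (LinearMap.lTensor H (Δ k H) ξ) (LinearMap.lTensor H βR z) := by
  have h₁ : ∀ a : H, (LinearMap.id : H →ₗ[k] H) ∘ₗ (LinearMap.mul k H).flip a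
      = (LinearMap.mul k H).flip ((LinearMap.id : H →ₗ[k] H) a) ∘ₗ (LinearMap.id : H →ₗ[k] H) := by intro a; ext x; rfl
  have h := act2_intertwine (LinearMap.mul k H).flip aR (LinearMap.mul k H).flip (RN aR)
      (LinearMap.id : H →ₗ[k] H) βR (LinearMap.id : H →ₗ[k] H) (Δ k H) h₁ (βR_actR_comp hB) ξ
  exact LinearMap.congr_fun h z

lemma rTensor_βL_LN (ξ : H ⊗[k] H) (z : Ω ⊗[k] H) :
    LinearMap.rTensor H βL (LN aL ξ z)
      = LP' aL (LinearMap.rTensor H (Δ k H) ξ) (LinearMap.rTensor H βL z) := by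
  have h₂ : ∀ a : H, (LinearMap.id : H →ₗ[k] H) ∘ₗ LinearMap.mul k H a
      = LinearMap.mul k H ((LinearMap.id : H →ₗ[k] H) a) ∘ₗ (LinearMap.id : H →ₗ[k] H) := by intro a; ext x; rfl
  have h := act2_intertwine aL (LinearMap.mul k H) (LM aL) (LinearMap.mul k H)
      βL (LinearMap.id : H →ₗ[k] H) (Δ k H) (LinearMap.id : H →ₗ[k] H) (βL_actL_comp hB) h₂ ξ
  exact LinearMap.congr_fun h z

lemma rTensor_βL_RN (ξ : H ⊗[k] H) (z : Ω ⊗[k] H) :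
    LinearMap.rTensor H βL (RN aR ξ z)
      = RP' aR (LinearMap.rTensor H (Δ k H) ξ) (LinearMap.rTensor H βL z) := by
  have h₂ : ∀ a : H, (LinearMap.id : H →ₗ[k] H) ∘ₗ (LinearMap.mul k H).flip a
      = (LinearMap.mul k H).flip ((LinearMap.id : H →ₗ[k] H) a) ∘ₗ (LinearMap.id : H →ₗ[k] H) := by intro a; ext x; rfl
  have h := act2_intertwine aR (LinearMap.mul k H).flip (RM aR) (LinearMap.mul k H).flip
      βL (LinearMap.id : H →ₗ[k] H) (Δ k H) (LinearMap.id : H →ₗ[k] H) (βL_actR_comp hB) h₂ ξ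
  exact LinearMap.congr_fun h z


lemma twistedβL_eq (χ χ' : H ⊗[k] H) (hx : χ = ∑ i ∈ s₁, x1 i ⊗ₜ[k] x2 i)
    (hy : χ' = ∑ j ∈ s₂, y1 j ⊗ₜ[k] y2 j) (v : Ω) :
    twistedβL k H Ω aL aR βL s₁ x1 x2 s₂ y1 y2 v = LM aL χ (RM aR χ' (βL v)) := by
  simp only [twistedβL, LinearMap.sum_apply, LinearMap.comp_apply, hx, hy, map_sum]
  rw [Finset.sum_comm]
  exact Finset.sum_congr rfl fun j _ => Finset.sum_congr rfl fun i _ =>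
    term_L hB (x1 i) (x2 i) (y1 j) (y2 j) (βL v)

lemma twistedβR_eq (χ χ' : H ⊗[k] H) (hx : χ = ∑ i ∈ s₁, x1 i ⊗ₜ[k] x2 i)
    (hy : χ' = ∑ j ∈ s₂, y1 j ⊗ₜ[k] y2 j) (v : Ω) :
    twistedβR k H Ω aL aR βR s₁ x1 x2 s₂ y1 y2 v = LN aL χ (RN aR χ' (βR v)) := by
  simp only [twistedβR, LinearMap.sum_apply, LinearMap.comp_apply, hx, hy, map_sum]
  rw [Finset.sum_comm]
  exact Finset.sum_congr rfl fun j _ => Finset.sum_congr rfl fun i _ =>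
    term_N hB (x1 i) (x2 i) (y1 j) (y2 j) (βR v)

omit hB in
lemma twistedComul_eq (χ χ' : H ⊗[k] H) (h : H) :
    twistedComul k H χ χ' h = χ * (Δ k H h * χ') := by
  simp [twistedComul]

lemma rTensor_twistedComul (χ χ' : H ⊗[k] H) (z : H ⊗[k] Ω) :
    LinearMap.rTensor Ω (twistedComul k H χ χ') z
      = LP aL (χ ⊗ₜ[k] 1) (RP aR (χ' ⊗ₜ[k] 1) (LinearMap.rTensor Ω (Δ k H) z)) := by
  induction z using TensorProduct.induction_on with
  | zero => simp
  | tmul h w =>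
    simp [LP, RP, twistedComul_eq, act2_flipmul, act2_mulmul, hB.actL_one, hB.actR_one]
  | add z₁ z₂ h₁ h₂ => simp only [map_add, h₁, h₂]

lemma lTensor_twistedβL (χ χ' : H ⊗[k] H) (hx : χ = ∑ i ∈ s₁, x1 i ⊗ₜ[k] x2 i)
    (hy : χ' = ∑ j ∈ s₂, y1 j ⊗ₜ[k] y2 j) (z : H ⊗[k] Ω) :
    LinearMap.lTensor H (twistedβL k H Ω aL aR βL s₁ x1 x2 s₂ y1 y2) z
      = LQ aL (1 ⊗ₜ[k] χ) (RQ aR (1 ⊗ₜ[k] χ') (LinearMap.lTensor H βL z)) := by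
  induction z using TensorProduct.induction_on with
  | zero => simp
  | tmul h w =>
    simp [LQ, RQ, twistedβL_eq hB χ χ' hx hy, one_mul, mul_one]
  | add z₁ z₂ h₁ h₂ => simp only [map_add, h₁, h₂]

lemma lTensor_twistedβR (χ χ' : H ⊗[k] H) (hx : χ = ∑ i ∈ s₁, x1 i ⊗ₜ[k] x2 i)
    (hy : χ' = ∑ j ∈ s₂, y1 j ⊗ₜ[k] y2 j) (z : H ⊗[k] Ω) :
    LinearMap.lTensor H (twistedβR k H Ω aL aR βR s₁ x1 x2 s₂ y1 y2) z
      = LQ' aL (1 ⊗ₜ[k] χ) (RQ' aR (1 ⊗ₜ[k] χ') (LinearMap.lTensor H βR z)) := by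
  induction z using TensorProduct.induction_on with
  | zero => simp
  | tmul h w =>
    simp [LQ', RQ', twistedβR_eq hB χ χ' hx hy, one_mul, mul_one]
  | add z₁ z₂ h₁ h₂ => simp only [map_add, h₁, h₂]

lemma rTensor_twistedβL (χ χ' : H ⊗[k] H) (hx : χ = ∑ i ∈ s₁, x1 i ⊗ₜ[k] x2 i)
    (hy : χ' = ∑ j ∈ s₂, y1 j ⊗ₜ[k] y2 j) (z : Ω ⊗[k] H) :
    LinearMap.rTensor H (twistedβL k H Ω aL aR βL s₁ x1 x2 s₂ y1 y2) z
      = LP' aL (χ ⊗ₜ[k] 1) (RP' aR (χ' ⊗ₜ[k] 1) (LinearMap.rTensor H βL z)) := by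
  induction z using TensorProduct.induction_on with
  | zero => simp
  | tmul w h =>
    simp [LP', RP', twistedβL_eq hB χ χ' hx hy, one_mul, mul_one]
  | add z₁ z₂ h₁ h₂ => simp only [map_add, h₁, h₂]

lemma counit_LM (ξ : H ⊗[k] H) (z : H ⊗[k] Ω) :
    (TensorProduct.lid k Ω) (LinearMap.rTensor Ω (ε k H) (LM aL ξ z))
      = aL (eps2 ξ) ((TensorProduct.lid k Ω) (LinearMap.rTensor Ω (ε k H) z)) := by
  induction ξ using TensorProduct.induction_on with
  | zero => simp
  | tmul a b =>
    induction z using TensorProduct.induction_on with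
    | zero => simp
    | tmul h w =>
      simp [LM, LinearMap.mul_apply', ε_mul', mul_smul, map_smul]
      rw [smul_comm]
    | add z₁ z₂ h₁ h₂ => simp only [map_add, h₁, h₂]
  | add ξ₁ ξ₂ h₁ h₂ =>
    simp only [map_add, LinearMap.add_apply, h₁, h₂]

lemma counit_RM (ξ : H ⊗[k] H) (z : H ⊗[k] Ω) :
    (TensorProduct.lid k Ω) (LinearMap.rTensor Ω (ε k H) (RM aR ξ z))
      = aR (eps2 ξ) ((TensorProduct.lid k Ω) (LinearMap.rTensor Ω (ε k H) z)) := by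
  induction ξ using TensorProduct.induction_on with
  | zero => simp
  | tmul a b =>
    induction z using TensorProduct.induction_on with
    | zero => simp
    | tmul h w =>
      simp [RM, LinearMap.mul_apply', ε_mul', mul_smul, map_smul, mul_comm]
      rw [smul_comm]
    | add z₁ z₂ h₁ h₂ => simp only [map_add, h₁, h₂]
  | add ξ₁ ξ₂ h₁ h₂ =>
    simp only [map_add, LinearMap.add_apply, h₁, h₂]


/-! ### Applied composition helpers -/

lemma LM_mul_ap (ξ η : H ⊗[k] H) (z : H ⊗[k] Ω) :
    LM aL (ξ * η) z = LM aL ξ (LM aL η z) := by rw [LM_mul hB]; rfl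
lemma RM_mul_ap (ξ η : H ⊗[k] H) (z : H ⊗[k] Ω) :
    RM aR (ξ * η) z = RM aR η (RM aR ξ z) := by rw [RM_mul hB]; rfl
lemma LM_RM_ap (ξ η : H ⊗[k] H) (z : H ⊗[k] Ω) :
    LM aL ξ (RM aR η z) = RM aR η (LM aL ξ z) := LinearMap.congr_fun (LM_RM_comm hB ξ η) z
lemma LP_mul_ap (ξ η : (H ⊗[k] H) ⊗[k] H) (z : (H ⊗[k] H) ⊗[k] Ω) :
    LP aL (ξ * η) z = LP aL ξ (LP aL η z) := by rw [LP_mul hB]; rfl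
lemma RP_mul_ap (ξ η : (H ⊗[k] H) ⊗[k] H) (z : (H ⊗[k] H) ⊗[k] Ω) :
    RP aR (ξ * η) z = RP aR η (RP aR ξ z) := by rw [RP_mul hB]; rfl
lemma LP_RP_ap (ξ η : (H ⊗[k] H) ⊗[k] H) (z : (H ⊗[k] H) ⊗[k] Ω) :
    LP aL ξ (RP aR η z) = RP aR η (LP aL ξ z) := LinearMap.congr_fun (LP_RP_comm hB ξ η) z
lemma LQ_mul_ap (ξ η : H ⊗[k] (H ⊗[k] H)) (z : H ⊗[k] (H ⊗[k] Ω)) :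
    LQ aL (ξ * η) z = LQ aL ξ (LQ aL η z) := by rw [LQ_mul hB]; rfl
lemma RQ_mul_ap (ξ η : H ⊗[k] (H ⊗[k] H)) (z : H ⊗[k] (H ⊗[k] Ω)) :
    RQ aR (ξ * η) z = RQ aR η (RQ aR ξ z) := by rw [RQ_mul hB]; rfl
lemma LQ_RQ_ap (ξ η : H ⊗[k] (H ⊗[k] H)) (z : H ⊗[k] (H ⊗[k] Ω)) :
    LQ aL ξ (RQ aR η z) = RQ aR η (LQ aL ξ z) := LinearMap.congr_fun (LQ_RQ_comm hB ξ η) z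
lemma LP'_mul_ap (ξ η : (H ⊗[k] H) ⊗[k] H) (z : (H ⊗[k] Ω) ⊗[k] H) :
    LP' aL (ξ * η) z = LP' aL ξ (LP' aL η z) := by rw [LP'_mul hB]; rfl
lemma RP'_mul_ap (ξ η : (H ⊗[k] H) ⊗[k] H) (z : (H ⊗[k] Ω) ⊗[k] H) :
    RP' aR (ξ * η) z = RP' aR η (RP' aR ξ z) := by rw [RP'_mul hB]; rfl
lemma LP'_RP'_ap (ξ η : (H ⊗[k] H) ⊗[k] H) (z : (H ⊗[k] Ω) ⊗[k] H) :
    LP' aL ξ (RP' aR η z) = RP' aR η (LP' aL ξ z) := LinearMap.congr_fun (LP'_RP'_comm hB ξ η) z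
lemma LQ'_mul_ap (ξ η : H ⊗[k] (H ⊗[k] H)) (z : H ⊗[k] (Ω ⊗[k] H)) :
    LQ' aL (ξ * η) z = LQ' aL ξ (LQ' aL η z) := by rw [LQ'_mul hB]; rfl
lemma RQ'_mul_ap (ξ η : H ⊗[k] (H ⊗[k] H)) (z : H ⊗[k] (Ω ⊗[k] H)) :
    RQ' aR (ξ * η) z = RQ' aR η (RQ' aR ξ z) := by rw [RQ'_mul hB]; rfl
lemma LQ'_RQ'_ap (ξ η : H ⊗[k] (H ⊗[k] H)) (z : H ⊗[k] (Ω ⊗[k] H)) :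
    LQ' aL ξ (RQ' aR η z) = RQ' aR η (LQ' aL ξ z) := LinearMap.congr_fun (LQ'_RQ'_comm hB ξ η) z

/-! ### Part 1: counitality -/

lemma part1 (χ χ' : H ⊗[k] H) (hχ : IsCocycle k H χ χ')
    (hx : χ = ∑ i ∈ s₁, x1 i ⊗ₜ[k] x2 i) (hy : χ' = ∑ j ∈ s₂, y1 j ⊗ₜ[k] y2 j) (v : Ω) :
    (TensorProduct.lid k Ω)
      ((LinearMap.rTensor Ω (ε k H)) (twistedβL k H Ω aL aR βL s₁ x1 x2 s₂ y1 y2 v)) = v := by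
  obtain ⟨h1, h2, h3, h4, h5⟩ := hχ
  have hεχ : eps2 χ = 1 := by simpa [eps2] using h4
  have hεχ' : eps2 χ' = 1 := by
    have h := eps2_mul (k := k) (H := H) χ χ'
    rw [h1, eps2_one, hεχ, one_mul] at h
    exact h.symm
  rw [twistedβL_eq hB χ χ' hx hy v, counit_LM hB, counit_RM hB, hεχ, hεχ', hB.βL_counit v,
    hB.actR_one, hB.actL_one]

/-! ### Part 3: bimodule property -/

lemma part3 (χ χ' : H ⊗[k] H) (hχ : IsCocycle k H χ χ')
    (hx : χ = ∑ i ∈ s₁, x1 i ⊗ₜ[k] x2 i) (hy : χ' = ∑ j ∈ s₂, y1 j ⊗ₜ[k] y2 j)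
    (h g : H) (v : Ω) (ι κ : Type) (s : Finset ι) (t : Finset κ)
    (h1 h2 : ι → H) (g1 g2 : κ → H)
    (hh : twistedComul k H χ χ' h = ∑ i ∈ s, h1 i ⊗ₜ[k] h2 i)
    (hg : twistedComul k H χ χ' g = ∑ j ∈ t, g1 j ⊗ₜ[k] g2 j) :
    twistedβL k H Ω aL aR βL s₁ x1 x2 s₂ y1 y2 (aR g (aL h v))
      = ∑ i ∈ s, ∑ j ∈ t,
          (TensorProduct.map
            ((LinearMap.mulLeft k (h1 i)) ∘ₗ (LinearMap.mulRight k (g1 j)))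
            ((aR (g2 j)) ∘ₗ (aL (h2 i))))
            (twistedβL k H Ω aL aR βL s₁ x1 x2 s₂ y1 y2 v) := by
  obtain ⟨hc1, hc2, -, -, -⟩ := hχ
  have hRHS : ∀ w : H ⊗[k] Ω, ∑ i ∈ s, ∑ j ∈ t,
      (TensorProduct.map
        ((LinearMap.mulLeft k (h1 i)) ∘ₗ (LinearMap.mulRight k (g1 j)))
        ((aR (g2 j)) ∘ₗ (aL (h2 i)))) w
      = LM aL (twistedComul k H χ χ' h) (RM aR (twistedComul k H χ χ' g) w) := by
    intro w
    simp only [hh, hg, map_sum, LinearMap.sum_apply]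
    rw [Finset.sum_comm]
    exact Finset.sum_congr rfl fun j _ => Finset.sum_congr rfl fun i _ =>
      term_L hB (h1 i) (h2 i) (g1 j) (g2 j) w
  rw [hRHS, twistedβL_eq hB χ χ' hx hy, twistedβL_eq hB χ χ' hx hy, βL_mod hB h g v]
  rw [← LM_RM_ap hB (Δ k H h) χ', ← LM_mul_ap hB, ← RM_mul_ap hB]
  rw [← LM_RM_ap hB χ (twistedComul k H χ χ' g), ← LM_mul_ap hB, ← RM_mul_ap hB]
  have e1 : χ * Δ k H h = twistedComul k H χ χ' h * χ := by
    rw [twistedComul_eq, mul_assoc, mul_assoc, hc2, mul_one]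
  have e2 : Δ k H g * χ' = χ' * twistedComul k H χ χ' g := by
    rw [twistedComul_eq, ← mul_assoc, hc2, one_mul]
  rw [e1, e2]

/-! ### Cocycle element identities -/

omit hB in
lemma cocycle_elements (χ χ' : H ⊗[k] H) (hχ : IsCocycle k H χ χ') :
    ((1 : H) ⊗ₜ[k] χ) * LinearMap.lTensor H (Δ k H) χ
        = TensorProduct.assoc k H H H ((χ ⊗ₜ[k] (1 : H)) * LinearMap.rTensor H (Δ k H) χ)
      ∧ LinearMap.lTensor H (Δ k H) χ' * ((1 : H) ⊗ₜ[k] χ')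
        = TensorProduct.assoc k H H H
            (LinearMap.rTensor H (Δ k H) χ' * (χ' ⊗ₜ[k] (1 : H))) := by
  obtain ⟨h1, h2, h3, -, -⟩ := hχ
  refine ⟨h3, ?_⟩
  have hBA : (LinearMap.rTensor H (Δ k H) χ' * (χ' ⊗ₜ[k] (1 : H)))
      * ((χ ⊗ₜ[k] (1 : H)) * LinearMap.rTensor H (Δ k H) χ) = 1 := by
    rw [mul_assoc, ← mul_assoc (χ' ⊗ₜ[k] (1 : H)), Algebra.TensorProduct.tmul_mul_tmul,
      h2, one_mul, ← Algebra.TensorProduct.one_def, one_mul,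
      ← rTensor_mul' (Δ k H) Δ_mul', h2, rTensor_one' (Δ k H) Δ_one']
  have hCD : (((1 : H) ⊗ₜ[k] χ) * LinearMap.lTensor H (Δ k H) χ)
      * (LinearMap.lTensor H (Δ k H) χ' * ((1 : H) ⊗ₜ[k] χ')) = 1 := by
    rw [mul_assoc, ← mul_assoc (LinearMap.lTensor H (Δ k H) χ),
      ← lTensor_mul' (Δ k H) Δ_mul', h1, lTensor_one' (Δ k H) Δ_one', one_mul,
      Algebra.TensorProduct.tmul_mul_tmul, h1, one_mul, ← Algebra.TensorProduct.one_def]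
  calc LinearMap.lTensor H (Δ k H) χ' * ((1 : H) ⊗ₜ[k] χ')
      = (TensorProduct.assoc k H H H (LinearMap.rTensor H (Δ k H) χ' * (χ' ⊗ₜ[k] (1 : H)))
          * TensorProduct.assoc k H H H ((χ ⊗ₜ[k] (1 : H)) * LinearMap.rTensor H (Δ k H) χ))
            * (LinearMap.lTensor H (Δ k H) χ' * ((1 : H) ⊗ₜ[k] χ')) := by
        rw [← assoc_mul', hBA, assoc_one', one_mul]
    _ = TensorProduct.assoc k H H H (LinearMap.rTensor H (Δ k H) χ' * (χ' ⊗ₜ[k] (1 : H)))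
          * ((((1 : H) ⊗ₜ[k] χ) * LinearMap.lTensor H (Δ k H) χ)
            * (LinearMap.lTensor H (Δ k H) χ' * ((1 : H) ⊗ₜ[k] χ'))) := by
        rw [mul_assoc, ← h3]
    _ = TensorProduct.assoc k H H H
          (LinearMap.rTensor H (Δ k H) χ' * (χ' ⊗ₜ[k] (1 : H))) := by
        rw [hCD, mul_one]

/-! ### Transport along the associator -/

omit hB in
lemma assoc_symm_LQ (C : H ⊗[k] (H ⊗[k] H)) (u : H ⊗[k] (H ⊗[k] Ω)) :
    (TensorProduct.assoc k H H Ω).symm (LQ aL C u)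
      = LP aL ((TensorProduct.assoc k H H H).symm C)
          ((TensorProduct.assoc k H H Ω).symm u) := by
  apply (TensorProduct.assoc k H H Ω).injective
  rw [LinearEquiv.apply_symm_apply]
  simp only [LP, LQ, LM]
  rw [act2_assoc, LinearEquiv.apply_symm_apply, LinearEquiv.apply_symm_apply]

omit hB in
lemma assoc_symm_RQ (D : H ⊗[k] (H ⊗[k] H)) (u : H ⊗[k] (H ⊗[k] Ω)) :
    (TensorProduct.assoc k H H Ω).symm (RQ aR D u)
      = RP aR ((TensorProduct.assoc k H H H).symm D)
          ((TensorProduct.assoc k H H Ω).symm u) := by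
  apply (TensorProduct.assoc k H H Ω).injective
  rw [LinearEquiv.apply_symm_apply]
  simp only [RP, RQ, RM]
  rw [act2_assoc, LinearEquiv.apply_symm_apply, LinearEquiv.apply_symm_apply]

omit hB in
lemma assoc_LP' (ξ : (H ⊗[k] H) ⊗[k] H) (m : (H ⊗[k] Ω) ⊗[k] H) :
    TensorProduct.assoc k H Ω H (LP' aL ξ m)
      = LQ' aL (TensorProduct.assoc k H H H ξ) (TensorProduct.assoc k H Ω H m) := by
  simp only [LP', LQ', LM, LN]
  exact act2_assoc _ _ _ ξ m

omit hB in
lemma assoc_RP' (ξ : (H ⊗[k] H) ⊗[k] H) (m : (H ⊗[k] Ω) ⊗[k] H) :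
    TensorProduct.assoc k H Ω H (RP' aR ξ m)
      = RQ' aR (TensorProduct.assoc k H H H ξ) (TensorProduct.assoc k H Ω H m) := by
  simp only [RP', RQ', RM, RN]
  exact act2_assoc _ _ _ ξ m

/-! ### Part 2: coassociativity -/

lemma part2 (χ χ' : H ⊗[k] H) (hχ : IsCocycle k H χ χ')
    (hx : χ = ∑ i ∈ s₁, x1 i ⊗ₜ[k] x2 i) (hy : χ' = ∑ j ∈ s₂, y1 j ⊗ₜ[k] y2 j) (v : Ω) :
    (LinearMap.rTensor Ω (twistedComul k H χ χ'))
        (twistedβL k H Ω aL aR βL s₁ x1 x2 s₂ y1 y2 v)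
      = (TensorProduct.assoc k H H Ω).symm
          ((LinearMap.lTensor H (twistedβL k H Ω aL aR βL s₁ x1 x2 s₂ y1 y2))
            (twistedβL k H Ω aL aR βL s₁ x1 x2 s₂ y1 y2 v)) := by
  obtain ⟨hCA, hDB⟩ := cocycle_elements χ χ' hχ
  rw [twistedβL_eq hB χ χ' hx hy v, lTensor_twistedβL hB χ χ' hx hy,
    lTensor_βL_LM hB, lTensor_βL_RM hB,
    rTensor_twistedComul hB, rTensor_Δ_LM hB, rTensor_Δ_RM hB, hB.βL_coassoc v]
  rw [← LP_RP_ap hB, ← LP_mul_ap hB, ← RP_mul_ap hB]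
  rw [← LQ_RQ_ap hB, ← LQ_mul_ap hB, ← RQ_mul_ap hB]
  rw [assoc_symm_LQ, assoc_symm_RQ, hCA, hDB,
    LinearEquiv.symm_apply_apply, LinearEquiv.symm_apply_apply]

/-! ### Part 4: compatibility with the twisted right coaction -/

lemma part4 (χ χ' : H ⊗[k] H) (hχ : IsCocycle k H χ χ')
    (hx : χ = ∑ i ∈ s₁, x1 i ⊗ₜ[k] x2 i) (hy : χ' = ∑ j ∈ s₂, y1 j ⊗ₜ[k] y2 j) (v : Ω) :
    (LinearMap.lTensor H (twistedβR k H Ω aL aR βR s₁ x1 x2 s₂ y1 y2))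
        (twistedβL k H Ω aL aR βL s₁ x1 x2 s₂ y1 y2 v)
      = (TensorProduct.assoc k H Ω H)
          ((LinearMap.rTensor H (twistedβL k H Ω aL aR βL s₁ x1 x2 s₂ y1 y2))
            (twistedβR k H Ω aL aR βR s₁ x1 x2 s₂ y1 y2 v)) := by
  obtain ⟨hCA, hDB⟩ := cocycle_elements χ χ' hχ
  rw [twistedβL_eq hB χ χ' hx hy v, twistedβR_eq hB χ χ' hx hy v,
    lTensor_twistedβR hB χ χ' hx hy, lTensor_βR_LM hB, lTensor_βR_RM hB,
    rTensor_twistedβL hB χ χ' hx hy, rTensor_βL_LN hB, rTensor_βL_RN hB,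
    hB.coact_comm v]
  rw [← LQ'_RQ'_ap hB, ← LQ'_mul_ap hB, ← RQ'_mul_ap hB]
  rw [← LP'_RP'_ap hB, ← LP'_mul_ap hB, ← RP'_mul_ap hB]
  rw [assoc_LP', assoc_RP', ← hCA, ← hDB]

end withB2
end PaperAux



/-- For an `H`-bicovariant bimodule `Ω` and a counital 2-cocycle
`χ ∈ H ⊗ H` (with inverse `χ'`), the twisted left coaction `(β_L)_χ = χ·β_L(·)·χ⁻¹` is
counital, coassociative for the twisted coproduct `Δ_χ`, a bimodule map for the unchanged
bimodule structure (with `Δ_χ` governing the covariance), and commutes with the analogously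
twisted right coaction `(β_R)_χ`. -/
theorem statement_6
    {k H Ω : Type} [Field k] [Ring H] [HopfAlgebra k H] [AddCommGroup Ω] [Module k Ω]
    (hS : Function.Bijective (S k H))
    (aL aR : H →ₗ[k] Ω →ₗ[k] Ω) (βL : Ω →ₗ[k] H ⊗[k] Ω) (βR : Ω →ₗ[k] Ω ⊗[k] H)
    (hB : IsBicovariantBimodule k H Ω aL aR βL βR)
    (χ χ' : H ⊗[k] H) (hχ : IsCocycle k H χ χ')
    {ι₁ ι₂ : Type} (s₁ : Finset ι₁) (x1 x2 : ι₁ → H) (s₂ : Finset ι₂) (y1 y2 : ι₂ → H)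
    (hx : χ = ∑ i ∈ s₁, x1 i ⊗ₜ[k] x2 i) (hy : χ' = ∑ j ∈ s₂, y1 j ⊗ₜ[k] y2 j) :
    (∀ v : Ω, (TensorProduct.lid k Ω)
        ((LinearMap.rTensor Ω (ε k H)) (twistedβL k H Ω aL aR βL s₁ x1 x2 s₂ y1 y2 v)) = v)
    ∧ (∀ v : Ω,
        (LinearMap.rTensor Ω (twistedComul k H χ χ'))
            (twistedβL k H Ω aL aR βL s₁ x1 x2 s₂ y1 y2 v)
          = (TensorProduct.assoc k H H Ω).symm
              ((LinearMap.lTensor H (twistedβL k H Ω aL aR βL s₁ x1 x2 s₂ y1 y2))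
                (twistedβL k H Ω aL aR βL s₁ x1 x2 s₂ y1 y2 v)))
    ∧ (∀ (h g : H) (v : Ω) (ι κ : Type) (s : Finset ι) (t : Finset κ)
        (h1 h2 : ι → H) (g1 g2 : κ → H),
        twistedComul k H χ χ' h = ∑ i ∈ s, h1 i ⊗ₜ[k] h2 i →
        twistedComul k H χ χ' g = ∑ j ∈ t, g1 j ⊗ₜ[k] g2 j →
        twistedβL k H Ω aL aR βL s₁ x1 x2 s₂ y1 y2 (aR g (aL h v))
          = ∑ i ∈ s, ∑ j ∈ t,
              (TensorProduct.map
                ((LinearMap.mulLeft k (h1 i)) ∘ₗ (LinearMap.mulRight k (g1 j)))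
                ((aR (g2 j)) ∘ₗ (aL (h2 i))))
                (twistedβL k H Ω aL aR βL s₁ x1 x2 s₂ y1 y2 v))
    ∧ (∀ v : Ω,
        (LinearMap.lTensor H (twistedβR k H Ω aL aR βR s₁ x1 x2 s₂ y1 y2))
            (twistedβL k H Ω aL aR βL s₁ x1 x2 s₂ y1 y2 v)
          = (TensorProduct.assoc k H Ω H)
              ((LinearMap.rTensor H (twistedβL k H Ω aL aR βL s₁ x1 x2 s₂ y1 y2))
                (twistedβR k H Ω aL aR βR s₁ x1 x2 s₂ y1 y2 v))) := by
  exact ⟨fun v => PaperAux.part1 hB χ χ' hχ hx hy v,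
    fun v => PaperAux.part2 hB χ χ' hχ hx hy v,
    fun h g v ι κ s t h1 h2 g1 g2 hh hg =>
      PaperAux.part3 hB χ χ' hχ hx hy h g v ι κ s t h1 h2 g1 g2 hh hg,
    fun v => PaperAux.part4 hB χ χ' hχ hx hy v⟩
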